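/- Let x and y be two independent random points each drawn from a γ-strongly log-concave probability distribution on ℝⁿ (possibly different distributions), with 𝔼[y] = 0. Then for any α > 0, ℙ[α⟨x,x⟩ ≤ ⟨x,y⟩] ≤ 𝔼[exp(−(γα²/2)‖x‖²)]. -/
import Mathlib

open MeasureTheory ProbabilityTheory Real Set
open scoped RealInnerProductSpace ENNReal NNReal

-- integrability from two-sided subgaussian tails
lemma tail_integrable {Ω : Type*} [MeasurableSpace Ω] (μ : Measure Ω) [IsProbabilityMeasure μ]
    {Z : Ω → ℝ} (hZ : Measurable Z) {c : ℝ} (hc : 0 < c)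
    (h1 : ∀ r : ℝ, 0 ≤ r → μ {ω | r ≤ Z ω} ≤ ENNReal.ofReal (Real.exp (-c * r ^ 2)))
    (h2 : ∀ r : ℝ, 0 ≤ r → μ {ω | r ≤ -Z ω} ≤ ENNReal.ofReal (Real.exp (-c * r ^ 2))) :
    Integrable Z μ := by
  refine ⟨hZ.aestronglyMeasurable, ?_⟩
  rw [hasFiniteIntegral_iff_norm,
    lintegral_eq_lintegral_meas_lt μ (ae_of_all _ fun ω => norm_nonneg _) hZ.norm.aemeasurable]
  have key : ∫⁻ t in Ioi (0:ℝ), μ {a | t < ‖Z a‖}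
      ≤ ∫⁻ t in Ioi (0:ℝ), 2 * ENNReal.ofReal (Real.exp (-c * t ^ 2)) := by
    refine setLIntegral_mono (by fun_prop) (fun t ht => ?_)
    have hsub : {a | t < ‖Z a‖} ⊆ {ω | t ≤ Z ω} ∪ {ω | t ≤ -Z ω} := by
      intro a ha
      rcases abs_cases (Z a) with ⟨h, _⟩ | ⟨h, _⟩
      · left; simp only [Set.mem_setOf_eq]; simp only [Set.mem_setOf_eq, Real.norm_eq_abs] at ha; linarith
      · right; simp only [Set.mem_setOf_eq]; simp only [Set.mem_setOf_eq, Real.norm_eq_abs] at ha; linarith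
    calc μ {a | t < ‖Z a‖} ≤ μ ({ω | t ≤ Z ω} ∪ {ω | t ≤ -Z ω}) := measure_mono hsub
      _ ≤ μ {ω | t ≤ Z ω} + μ {ω | t ≤ -Z ω} := measure_union_le _ _
      _ ≤ ENNReal.ofReal (Real.exp (-c * t ^ 2)) + ENNReal.ofReal (Real.exp (-c * t ^ 2)) :=
          add_le_add (h1 t ht.le) (h2 t ht.le)
      _ = 2 * ENNReal.ofReal (Real.exp (-c * t ^ 2)) := by ring
  refine lt_of_le_of_lt key ?_
  rw [lintegral_const_mul _ (by fun_prop)]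
  refine ENNReal.mul_lt_top (by norm_num) ?_
  have hint : Integrable (fun t : ℝ => Real.exp (-c * t ^ 2)) := by
    simpa [neg_mul, mul_comm] using integrable_exp_neg_mul_sq hc
  calc ∫⁻ t in Ioi (0:ℝ), ENNReal.ofReal (Real.exp (-c * t ^ 2))
      ≤ ∫⁻ t : ℝ, ENNReal.ofReal (Real.exp (-c * t ^ 2)) :=
        setLIntegral_le_lintegral _ _
    _ ≤ ∫⁻ t : ℝ, ‖Real.exp (-c * t ^ 2)‖₊ := by
        refine lintegral_mono fun t => ?_
        exact Real.ofReal_le_enorm _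
    _ < ⊤ := hint.2

lemma lip_inner {n : ℕ} (u : EuclideanSpace ℝ (Fin n)) (hu : ‖u‖ ≤ 1) :
    LipschitzWith 1 (fun y : EuclideanSpace ℝ (Fin n) => ⟪u, y⟫) := by
  refine LipschitzWith.of_dist_le_mul fun a b => ?_
  rw [Real.dist_eq, dist_eq_norm, ← inner_sub_right]
  calc |⟪u, a - b⟫| ≤ ‖u‖ * ‖a - b‖ := abs_real_inner_le_norm u (a - b)
    _ ≤ 1 * ‖a - b‖ := by gcongr

theorem stmt_4 {Ω : Type*} [MeasurableSpace Ω] (μ : Measure Ω) [IsProbabilityMeasure μ]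
    (n : ℕ) (γ α : ℝ) (hγ : 0 < γ) (hα : 0 < α)
    (X Y : Ω → EuclideanSpace ℝ (Fin n)) (hXm : Measurable X) (hYm : Measurable Y)
    (hindep : IndepFun X Y μ)
    (hY0 : ∫ ω, Y ω ∂μ = 0)
    (hconc : ∀ g : EuclideanSpace ℝ (Fin n) → ℝ, LipschitzWith 1 g → ∀ r : ℝ, 0 ≤ r →
      μ {ω | (∫ ω', g (Y ω') ∂μ) + r ≤ g (Y ω)} ≤ ENNReal.ofReal (Real.exp (-γ * r^2 / 2))) :
    (μ {ω | α * ⟪X ω, X ω⟫ ≤ ⟪X ω, Y ω⟫}).toReal ≤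
      ∫ ω, Real.exp (-(γ * α^2 / 2) * ‖X ω‖^2) ∂μ := by
  -- Step A: for ‖u‖ ≤ 1, ⟪u, Y⟫ is integrable
  have hZint : ∀ u : EuclideanSpace ℝ (Fin n), ‖u‖ ≤ 1 →
      Integrable (fun ω => ⟪u, Y ω⟫) μ := by
    intro u hu
    have hg := lip_inner u hu
    set m := ∫ ω', ⟪u, Y ω'⟫ ∂μ with hm
    have hZm : Measurable (fun ω => ⟪u, Y ω⟫ - m) := by
      have h1 : Measurable (fun y : EuclideanSpace ℝ (Fin n) => ⟪u, y⟫) :=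
        hg.continuous.measurable
      exact (h1.comp hYm).sub measurable_const
    have hInt : Integrable (fun ω => ⟪u, Y ω⟫ - m) μ := by
      refine tail_integrable μ hZm (c := γ / 2) (by positivity) (fun r hr => ?_) (fun r hr => ?_)
      · have h := hconc _ hg r hr
        have hset : {ω | r ≤ ⟪u, Y ω⟫ - m} = {ω | (∫ ω', ⟪u, Y ω'⟫ ∂μ) + r ≤ ⟪u, Y ω⟫} := by
          ext ω; simp only [Set.mem_setOf_eq, ← hm]; constructor <;> intro <;> linarith
        rw [hset, show -(γ/2) * r^2 = -γ * r^2 / 2 by ring]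
        exact h
      · have hg' : LipschitzWith 1 (fun y : EuclideanSpace ℝ (Fin n) => -⟪u, y⟫) := by
          have := lip_inner (-u) (by rwa [norm_neg])
          simpa [inner_neg_left] using this
        have h := hconc _ hg' r hr
        have hmm : (∫ ω', -⟪u, Y ω'⟫ ∂μ) = -m := by rw [hm, ← integral_neg]
        have hset : {ω | r ≤ -(⟪u, Y ω⟫ - m)} = {ω | (∫ ω', -⟪u, Y ω'⟫ ∂μ) + r ≤ -⟪u, Y ω⟫} := by
          ext ω; simp only [Set.mem_setOf_eq, hmm]; constructor <;> intro <;> linarith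
        rw [hset, show -(γ/2) * r^2 = -γ * r^2 / 2 by ring]
        exact h
    have h3 := hInt.add (integrable_const m)
    have h4 : ((fun ω => ⟪u, Y ω⟫ - m) + fun _ => m) = fun ω => ⟪u, Y ω⟫ := by
      funext ω; simp
    rwa [h4] at h3
  -- Step B: Y is integrable
  have hYint : Integrable Y μ := by
    have hcoord : ∀ i : Fin n, Integrable (fun ω => |Y ω i|) μ := by
      intro i
      have h1 : ‖(EuclideanSpace.single i (1:ℝ))‖ ≤ 1 := by
        rw [EuclideanSpace.norm_single]; simp
      have h2 := (hZint _ h1).abs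
      simpa [EuclideanSpace.inner_single_left] using h2
    have hb : Integrable (fun ω => ∑ i, |Y ω i|) μ :=
      integrable_finset_sum _ fun i _ => hcoord i
    refine hb.mono' hYm.aestronglyMeasurable (ae_of_all _ fun ω => ?_)
    rw [EuclideanSpace.norm_eq]
    have h2 : ∑ i, ‖Y ω i‖ ^ 2 ≤ (∑ i, |Y ω i|) ^ 2 := by
      refine le_trans (le_of_eq ?_) (Finset.sum_sq_le_sq_sum_of_nonneg fun i _ => abs_nonneg _)
      simp [Real.norm_eq_abs, sq_abs]
    calc Real.sqrt (∑ i, ‖Y ω i‖ ^ 2) ≤ Real.sqrt ((∑ i, |Y ω i|) ^ 2) := Real.sqrt_le_sqrt h2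
      _ = ∑ i, |Y ω i| := Real.sqrt_sq (Finset.sum_nonneg fun i _ => abs_nonneg _)
  -- mean zero of inner products
  have hmean : ∀ x : EuclideanSpace ℝ (Fin n), (∫ ω, ⟪x, Y ω⟫ ∂μ) = 0 := by
    intro x
    rw [integral_inner hYint x, hY0, inner_zero_right]
  -- Step C: pointwise bound
  have hkey : ∀ x : EuclideanSpace ℝ (Fin n), μ {ω | α * ⟪x, x⟫ ≤ ⟪x, Y ω⟫}
      ≤ ENNReal.ofReal (Real.exp (-(γ * α ^ 2 / 2) * ‖x‖ ^ 2)) := by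
    intro x
    rcases eq_or_ne x 0 with rfl | hx
    · simp only [inner_zero_left, inner_zero_right, mul_zero, norm_zero]
      norm_num
    · have hxn : (0:ℝ) < ‖x‖ := norm_pos_iff.mpr hx
      set u : EuclideanSpace ℝ (Fin n) := ‖x‖⁻¹ • x with hu
      have hun : ‖u‖ ≤ 1 := by
        rw [hu, norm_smul, norm_inv, norm_norm, inv_mul_cancel₀ hxn.ne']
      have hg := lip_inner u hun
      have h := hconc _ hg (α * ‖x‖) (by positivity)
      rw [hmean u] at h
      have hinu : ∀ y : EuclideanSpace ℝ (Fin n), ⟪u, y⟫ = ‖x‖⁻¹ * ⟪x, y⟫ := by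
        intro y; rw [hu, real_inner_smul_left]
      have hset : {ω | α * ⟪x, x⟫ ≤ ⟪x, Y ω⟫} = {ω | 0 + α * ‖x‖ ≤ ⟪u, Y ω⟫} := by
        ext ω
        simp only [Set.mem_setOf_eq, hinu, zero_add, real_inner_self_eq_norm_sq]
        rw [le_inv_mul_iff₀ hxn]
        constructor <;> intro <;> nlinarith
      rw [hset]
      refine le_trans h (le_of_eq ?_)
      congr 1
      ring
  -- Step D: Fubini via independence
  set ν := μ.map X with hν
  set piY := μ.map Y with hπ
  have hπP : IsProbabilityMeasure piY := Measure.isProbabilityMeasure_map hYm.aemeasurable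
  have hνP : IsProbabilityMeasure ν := Measure.isProbabilityMeasure_map hXm.aemeasurable
  have hmap : μ.map (fun ω => (X ω, Y ω)) = ν.prod piY :=
    (indepFun_iff_map_prod_eq_prod_map_map hXm.aemeasurable hYm.aemeasurable).mp hindep
  have hScont : Continuous (fun p : EuclideanSpace ℝ (Fin n) × EuclideanSpace ℝ (Fin n) =>
      ⟪p.1, p.2⟫ - α * ⟪p.1, p.1⟫) := by
    have hi : Continuous fun p : EuclideanSpace ℝ (Fin n) × EuclideanSpace ℝ (Fin n) =>
        ⟪p.1, p.2⟫ := continuous_inner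
    exact hi.sub (continuous_const.mul (hi.comp (continuous_fst.prodMk continuous_fst)))
  have hS : MeasurableSet {p : EuclideanSpace ℝ (Fin n) × EuclideanSpace ℝ (Fin n) |
      α * ⟪p.1, p.1⟫ ≤ ⟪p.1, p.2⟫} := by
    have he : {p : EuclideanSpace ℝ (Fin n) × EuclideanSpace ℝ (Fin n) |
        α * ⟪p.1, p.1⟫ ≤ ⟪p.1, p.2⟫}
        = (fun p : EuclideanSpace ℝ (Fin n) × EuclideanSpace ℝ (Fin n) =>
            ⟪p.1, p.2⟫ - α * ⟪p.1, p.1⟫) ⁻¹' (Ici 0) := by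
      ext p; simp [sub_nonneg]
    rw [he]
    exact hScont.measurable measurableSet_Ici
  have hmeq : μ {ω | α * ⟪X ω, X ω⟫ ≤ ⟪X ω, Y ω⟫}
      = (ν.prod piY) {p : EuclideanSpace ℝ (Fin n) × EuclideanSpace ℝ (Fin n) |
          α * ⟪p.1, p.1⟫ ≤ ⟪p.1, p.2⟫} := by
    rw [← hmap, Measure.map_apply (hXm.prodMk hYm) hS]
    rfl
  have hsec : ∀ x : EuclideanSpace ℝ (Fin n),
      MeasurableSet {y : EuclideanSpace ℝ (Fin n) | α * ⟪x, x⟫ ≤ ⟪x, y⟫} := by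
    intro x
    have hc : Continuous (fun y : EuclideanSpace ℝ (Fin n) => ⟪x, y⟫) := continuous_const.inner continuous_id
    exact measurableSet_le measurable_const hc.measurable
  have hprod : (ν.prod piY) {p : EuclideanSpace ℝ (Fin n) × EuclideanSpace ℝ (Fin n) |
      α * ⟪p.1, p.1⟫ ≤ ⟪p.1, p.2⟫}
      = ∫⁻ x, piY {y : EuclideanSpace ℝ (Fin n) | α * ⟪x, x⟫ ≤ ⟪x, y⟫} ∂ν := by
    rw [Measure.prod_apply hS]
    rfl
  have hπx : ∀ x : EuclideanSpace ℝ (Fin n),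
      piY {y : EuclideanSpace ℝ (Fin n) | α * ⟪x, x⟫ ≤ ⟪x, y⟫}
      = μ {ω | α * ⟪x, x⟫ ≤ ⟪x, Y ω⟫} := by
    intro x
    rw [hπ, Measure.map_apply hYm (hsec x)]
    rfl
  have hbmeas : Measurable (fun x : EuclideanSpace ℝ (Fin n) =>
      ENNReal.ofReal (Real.exp (-(γ * α ^ 2 / 2) * ‖x‖ ^ 2))) := by fun_prop
  have hlin : ∫⁻ x, piY {y : EuclideanSpace ℝ (Fin n) | α * ⟪x, x⟫ ≤ ⟪x, y⟫} ∂ν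
      ≤ ∫⁻ x, ENNReal.ofReal (Real.exp (-(γ * α ^ 2 / 2) * ‖x‖ ^ 2)) ∂ν := by
    refine lintegral_mono fun x => ?_
    rw [hπx x]
    exact hkey x
  have hfin : ∫⁻ x, ENNReal.ofReal (Real.exp (-(γ * α ^ 2 / 2) * ‖x‖ ^ 2)) ∂ν
      = ∫⁻ ω, ENNReal.ofReal (Real.exp (-(γ * α ^ 2 / 2) * ‖X ω‖ ^ 2)) ∂μ := by
    rw [hν, lintegral_map hbmeas hXm]
  have hle1 : ∫⁻ ω, ENNReal.ofReal (Real.exp (-(γ * α ^ 2 / 2) * ‖X ω‖ ^ 2)) ∂μ ≤ 1 := by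
    calc ∫⁻ ω, ENNReal.ofReal (Real.exp (-(γ * α ^ 2 / 2) * ‖X ω‖ ^ 2)) ∂μ
        ≤ ∫⁻ _, 1 ∂μ := by
          refine lintegral_mono fun ω => ?_
          rw [show (1:ℝ≥0∞) = ENNReal.ofReal 1 by simp]
          refine ENNReal.ofReal_le_ofReal ?_
          rw [← Real.exp_zero]
          refine Real.exp_le_exp.mpr ?_
          have h0 : (0:ℝ) ≤ (γ * α ^ 2 / 2) * ‖X ω‖ ^ 2 := by positivity
          rw [neg_mul]; exact neg_nonpos.mpr h0
      _ = 1 := by simp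
  have hieq : ∫ ω, Real.exp (-(γ * α ^ 2 / 2) * ‖X ω‖ ^ 2) ∂μ
      = (∫⁻ ω, ENNReal.ofReal (Real.exp (-(γ * α ^ 2 / 2) * ‖X ω‖ ^ 2)) ∂μ).toReal := by
    have hm1 : Measurable fun ω => Real.exp (-(γ * α ^ 2 / 2) * ‖X ω‖ ^ 2) :=
      Real.measurable_exp.comp (measurable_const.mul (hXm.norm.pow_const 2))
    rw [integral_eq_lintegral_of_nonneg_ae (ae_of_all _ fun ω => (Real.exp_nonneg _))
      hm1.aestronglyMeasurable]
  rw [hmeq, hprod, hieq]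
  exact ENNReal.toReal_mono (lt_of_le_of_lt hle1 ENNReal.one_lt_top).ne
    (le_trans hlin (le_of_eq hfin))
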